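/- arXiv:0901.3056 — 5 statements merged into one kernel-verified Lean document; each statement's English description precedes it below -/
import Mathlib

section
/- The set V_A of strictly positive probability mass functions on a finite alphabet A, equipped with addition p ⊞ q := (1/Z) p(x)q(x) (Z a normalizing constant) and scalar multiplication α ⊡ p := (1/Z) p(x)^α, forms a vector space over ℝ. -/
open Finset

/-- A strictly positive probability mass function on a finite alphabet. -/
def IsPPMF {A : Type*} [Fintype A] (p : A → ℝ) : Prop :=
  (∀ x, 0 < p x) ∧ ∑ x, p x = 1

/-- Addition of PMFs: normalized pointwise product. -/
noncomputable def padd {A : Type*} [Fintype A] (p q : A → ℝ) : A → ℝ :=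
  fun x => p x * q x / ∑ y, p y * q y

/-- Scalar multiplication of PMFs: normalized pointwise real power. -/
noncomputable def psmul {A : Type*} [Fintype A] (α : ℝ) (p : A → ℝ) : A → ℝ :=
  fun x => p x ^ α / ∑ y, p y ^ α

/-- The uniform PMF, the zero vector of the PMF vector space. -/
noncomputable def unif (A : Type*) [Fintype A] : A → ℝ :=
  fun _ => (Fintype.card A : ℝ)⁻¹

/-- The isometric map L from PMFs to ℝ^|A|. -/
noncomputable def Lmap {A : Type*} [Fintype A] (p : A → ℝ) : A → ℝ :=
  fun x => Real.log (p x ^ (Fintype.card A) / ∏ y, p y)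

section Aux

variable {A : Type*} [Fintype A]

noncomputable def nmz (f : A → ℝ) : A → ℝ := fun x => f x / ∑ y, f y

lemma padd_eq_nmz (p q : A → ℝ) : padd p q = nmz (fun x => p x * q x) := rfl

lemma psmul_eq_nmz (α : ℝ) (p : A → ℝ) : psmul α p = nmz (fun x => p x ^ α) := rfl

lemma spos [Nonempty A] (f : A → ℝ) (hf : ∀ x, 0 < f x) : 0 < ∑ x, f x :=
  Finset.sum_pos (fun i _ => hf i) Finset.univ_nonempty

lemma nmz_scale (f : A → ℝ) (c : ℝ) (hc : c ≠ 0) :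
    nmz (fun x => f x / c) = nmz f := by
  funext x
  simp only [nmz, ← Finset.sum_div]
  rcases eq_or_ne (∑ y, f y) 0 with h | h
  · simp [h]
  · field_simp

lemma nmz_ppmf [Nonempty A] (f : A → ℝ) (hf : ∀ x, 0 < f x) : IsPPMF (nmz f) := by
  have hS := spos f hf
  refine ⟨fun x => div_pos (hf x) hS, ?_⟩
  simp only [nmz, ← Finset.sum_div]
  exact div_self hS.ne'

lemma ppmf_nmz (p : A → ℝ) (hp : IsPPMF p) : nmz p = p := by
  funext x; simp [nmz, hp.2]

lemma padd_nmz_left (f g : A → ℝ) (hS : ∑ y, f y ≠ 0) :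
    padd (nmz f) g = nmz (fun x => f x * g x) := by
  have h : padd (nmz f) g = nmz (fun x => f x * g x / ∑ y, f y) := by
    funext x; simp only [padd, nmz, div_mul_eq_mul_div]
  rw [h, nmz_scale _ _ hS]

lemma padd_nmz_right (f g : A → ℝ) (hS : ∑ y, g y ≠ 0) :
    padd f (nmz g) = nmz (fun x => f x * g x) := by
  have h : padd f (nmz g) = nmz (fun x => f x * g x / ∑ y, g y) := by
    funext x; simp only [padd, nmz, mul_div_assoc]
  rw [h, nmz_scale _ _ hS]

lemma psmul_nmz [Nonempty A] (α : ℝ) (f : A → ℝ) (hf : ∀ x, 0 < f x) :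
    psmul α (nmz f) = nmz (fun x => f x ^ α) := by
  have hS := spos f hf
  have key : ∀ y : A, (f y / ∑ z, f z) ^ α = f y ^ α / (∑ z, f z) ^ α :=
    fun y => Real.div_rpow (hf y).le hS.le α
  have h : psmul α (nmz f) = nmz (fun x => f x ^ α / (∑ y, f y) ^ α) := by
    funext x
    simp only [psmul, nmz, key]
  rw [h, nmz_scale _ _ (Real.rpow_pos_of_pos hS α).ne']

lemma padd_nmz_both [Nonempty A] (f g : A → ℝ) (hf : ∑ y, f y ≠ 0) (hg : ∑ y, g y ≠ 0) :
    padd (nmz f) (nmz g) = nmz (fun x => f x * g x) := by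
  rw [padd_nmz_left _ _ hf]
  have h : (fun x => f x * nmz g x) = fun x => f x * g x / ∑ y, g y := by
    funext x; simp [nmz, mul_div_assoc]
  rw [h, nmz_scale _ _ hg]

end Aux

/-- The set of strictly positive PMFs on a finite alphabet `A`, with addition
`padd` and scalar multiplication `psmul` (zero vector the uniform PMF), forms a
vector space over ℝ: it is closed under the operations and all the vector space
axioms hold. -/
theorem stmt_0 {A : Type*} [Fintype A] (hA : 2 ≤ Fintype.card A) :
    (∀ p q : A → ℝ, IsPPMF p → IsPPMF q → IsPPMF (padd p q)) ∧
    (∀ (α : ℝ) (p : A → ℝ), IsPPMF p → IsPPMF (psmul α p)) ∧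
    IsPPMF (unif A) ∧
    (∀ p q : A → ℝ, IsPPMF p → IsPPMF q → padd p q = padd q p) ∧
    (∀ p q r : A → ℝ, IsPPMF p → IsPPMF q → IsPPMF r →
      padd (padd p q) r = padd p (padd q r)) ∧
    (∀ p : A → ℝ, IsPPMF p → padd p (unif A) = p) ∧
    (∀ p : A → ℝ, IsPPMF p → padd p (psmul (-1) p) = unif A) ∧
    (∀ p : A → ℝ, IsPPMF p → psmul 1 p = p) ∧
    (∀ (α β : ℝ) (p : A → ℝ), IsPPMF p → psmul α (psmul β p) = psmul (α * β) p) ∧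
    (∀ (α : ℝ) (p q : A → ℝ), IsPPMF p → IsPPMF q →
      psmul α (padd p q) = padd (psmul α p) (psmul α q)) ∧
    (∀ (α β : ℝ) (p : A → ℝ), IsPPMF p →
      psmul (α + β) p = padd (psmul α p) (psmul β p)) := by
  have hcard : 0 < Fintype.card A := by omega
  have hne : Nonempty A := Fintype.card_pos_iff.mp hcard
  have hcR : (0 : ℝ) < (Fintype.card A : ℝ) := by exact_mod_cast hcard
  -- uniform as a normalization of the constant 1 function
  have hunif : unif A = nmz (fun _ : A => (1 : ℝ)) := by
    funext x
    simp [unif, nmz, Finset.card_univ, one_div]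
  refine ⟨?_, ?_, ?_, ?_, ?_, ?_, ?_, ?_, ?_, ?_, ?_⟩
  · intro p q hp hq
    rw [padd_eq_nmz]
    exact nmz_ppmf _ (fun x => mul_pos (hp.1 x) (hq.1 x))
  · intro α p hp
    rw [psmul_eq_nmz]
    exact nmz_ppmf _ (fun x => Real.rpow_pos_of_pos (hp.1 x) α)
  · rw [hunif]
    exact nmz_ppmf _ (fun _ => one_pos)
  · intro p q hp hq
    funext x
    simp only [padd]
    rw [mul_comm (p x)]
    congr 1
    exact Finset.sum_congr rfl fun y _ => mul_comm _ _
  · intro p q r hp hq hr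
    have hpq : (∑ y, p y * q y) ≠ 0 := (spos _ fun x => mul_pos (hp.1 x) (hq.1 x)).ne'
    have hqr : (∑ y, q y * r y) ≠ 0 := (spos _ fun x => mul_pos (hq.1 x) (hr.1 x)).ne'
    rw [padd_eq_nmz p q, padd_nmz_left _ _ hpq, padd_eq_nmz q r, padd_nmz_right _ _ hqr]
    simp only [mul_assoc]
  · intro p hp
    have h : padd p (unif A) = nmz (fun x => p x * 1) := by
      rw [hunif, padd_nmz_right]
      simp [hcR.ne']
    rw [h]
    simp only [mul_one]
    exact ppmf_nmz p hp
  · intro p hp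
    have hS : (∑ y, p y ^ (-1 : ℝ)) ≠ 0 :=
      (spos _ fun x => Real.rpow_pos_of_pos (hp.1 x) _).ne'
    rw [psmul_eq_nmz, padd_nmz_right _ _ hS, hunif]
    have h : (fun x => p x * p x ^ (-1 : ℝ)) = fun _ : A => (1 : ℝ) := by
      funext x
      rw [Real.rpow_neg_one, mul_inv_cancel₀ (hp.1 x).ne']
    rw [h]
  · intro p hp
    rw [psmul_eq_nmz]
    simp only [Real.rpow_one]
    exact ppmf_nmz p hp
  · intro α β p hp
    rw [psmul_eq_nmz β, psmul_nmz _ _ (fun x => Real.rpow_pos_of_pos (hp.1 x) β),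
      psmul_eq_nmz]
    have h : (fun x => (p x ^ β) ^ α) = fun x => p x ^ (α * β) := by
      funext x
      rw [← Real.rpow_mul (hp.1 x).le, mul_comm β α]
    rw [h]
  · intro α p q hp hq
    have hpq : ∀ x, 0 < p x * q x := fun x => mul_pos (hp.1 x) (hq.1 x)
    have hp' : (∑ y, p y ^ α) ≠ 0 :=
      (spos _ fun x => Real.rpow_pos_of_pos (hp.1 x) α).ne'
    have hq' : (∑ y, q y ^ α) ≠ 0 :=
      (spos _ fun x => Real.rpow_pos_of_pos (hq.1 x) α).ne'
    rw [padd_eq_nmz p q, psmul_nmz _ _ hpq, psmul_eq_nmz α p, psmul_eq_nmz α q,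
      padd_nmz_both _ _ hp' hq']
    have h : (fun x => (p x * q x) ^ α) = fun x => p x ^ α * q x ^ α := by
      funext x
      rw [Real.mul_rpow (hp.1 x).le (hq.1 x).le]
    rw [h]
  · intro α β p hp
    have hp' : (∑ y, p y ^ α) ≠ 0 :=
      (spos _ fun x => Real.rpow_pos_of_pos (hp.1 x) α).ne'
    have hp'' : (∑ y, p y ^ β) ≠ 0 :=
      (spos _ fun x => Real.rpow_pos_of_pos (hp.1 x) β).ne'
    rw [psmul_eq_nmz α p, psmul_eq_nmz β p, padd_nmz_both _ _ hp' hp'', psmul_eq_nmz]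
    have h : (fun x => p x ^ (α + β)) = fun x => p x ^ α * p x ^ β := by
      funext x
      rw [Real.rpow_add (hp.1 x)]
    rw [h]
end

section
/- The range of the map L : V_A → ℝ^{|A|}, L(p)_i = log( p(x_i)^{|A|} / Π_y p(y) ), is exactly the hyperplane { v ∈ ℝ^{|A|} : Σ_i v_i = 0 }; consequently, the vector space V_A of strictly positive PMFs on A has dimension |A| − 1. -/
open Finset

/-- The coordinate-sum functional on ℝ^A, as a linear map. -/
def sumLM (A : Type*) [Fintype A] : (A → ℝ) →ₗ[ℝ] ℝ where
  toFun v := ∑ i, v i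
  map_add' := by intro u v; simp [Finset.sum_add_distrib]
  map_smul' := by intro c v; simp [Finset.mul_sum]

/-- The range of `L` on strictly positive PMFs is exactly the hyperplane of
zero-sum vectors in ℝ^|A|; consequently the vector space `V_A` (which `L` maps
isomorphically onto this hyperplane) has dimension `|A| - 1`. -/
theorem stmt_4 {A : Type*} [Fintype A] (hA : 2 ≤ Fintype.card A) :
    {v : A → ℝ | ∃ p : A → ℝ, IsPPMF p ∧ Lmap p = v} = {v : A → ℝ | ∑ i, v i = 0} ∧
    Module.finrank ℝ (LinearMap.ker (sumLM A)) = Fintype.card A - 1 := by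
  have hcard : (0:ℝ) < (Fintype.card A : ℝ) := by
    have : 0 < Fintype.card A := by omega
    exact_mod_cast this
  have hn : (Fintype.card A : ℝ) ≠ 0 := ne_of_gt hcard
  have hne : Nonempty A := Fintype.card_pos_iff.mp (by omega)
  constructor
  · ext v
    simp only [Set.mem_setOf_eq]
    constructor
    · rintro ⟨p, ⟨hpos, hsum⟩, rfl⟩
      have hprod : (0:ℝ) < ∏ y, p y := Finset.prod_pos (fun y _ => hpos y)
      have hL : ∀ x, Lmap p x = (Fintype.card A : ℝ) * Real.log (p x) - ∑ y, Real.log (p y) := by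
        intro x
        unfold Lmap
        rw [Real.log_div (pow_ne_zero _ (ne_of_gt (hpos x))) (ne_of_gt hprod), Real.log_pow,
          Real.log_prod (fun y _ => ne_of_gt (hpos y))]
      simp only [hL, Finset.sum_sub_distrib, Finset.sum_const, ← Finset.mul_sum,
        nsmul_eq_mul, Finset.card_univ]
      ring
    · intro hv
      set n : ℝ := (Fintype.card A : ℝ)
      set S : ℝ := ∑ y, Real.exp (v y / n) with hS
      have hSpos : 0 < S := Finset.sum_pos (fun y _ => Real.exp_pos _) Finset.univ_nonempty
      refine ⟨fun x => Real.exp (v x / n) / S, ⟨fun x => by positivity, ?_⟩, ?_⟩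
      · rw [← Finset.sum_div, ← hS, div_self (ne_of_gt hSpos)]
      · funext x
        unfold Lmap
        have h1 : (Real.exp (v x / n) / S) ^ Fintype.card A = Real.exp (v x) / S ^ Fintype.card A := by
          rw [div_pow, ← Real.exp_nat_mul]
          congr 1
          exact congrArg Real.exp (by rw [← mul_div_assoc]; exact mul_div_cancel_left₀ (v x) hn)
        have h2 : ∏ y, Real.exp (v y / n) / S = 1 / S ^ Fintype.card A := by
          rw [Finset.prod_div_distrib, ← Real.exp_sum, ← Finset.sum_div, hv, zero_div,
            Real.exp_zero, Finset.prod_const, Finset.card_univ]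
        rw [h1, h2]
        have hSn : (0:ℝ) < S ^ Fintype.card A := by positivity
        have : Real.exp (v x) / S ^ Fintype.card A / (1 / S ^ Fintype.card A)
            = Real.exp (v x) := by field_simp
        rw [this, Real.log_exp]
  · have hsurj : Function.Surjective (sumLM A) := by
      intro r
      classical
      obtain ⟨a⟩ := hne
      refine ⟨fun x => if x = a then r else 0, ?_⟩
      simp [sumLM]
    have := LinearMap.finrank_range_add_finrank_ker (sumLM A)
    rw [LinearMap.range_eq_top.mpr hsurj] at this
    simp only [finrank_top, Module.finrank_self] at this
    have hfr : Module.finrank ℝ (A → ℝ) = Fintype.card A := by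
      simp [Module.finrank_pi]
    omega
end

section
/- The function ⟨p, q⟩ := Σ_{x∈A} log( p(x)^{|A|} / Π_y p(y) ) · log( q(x)^{|A|} / Π_y q(y) ) is an inner product on the vector space V_A of strictly positive PMFs on A. -/
open Finset

/-- The inner product of two PMFs. -/
noncomputable def pinner {A : Type*} [Fintype A] (p q : A → ℝ) : ℝ :=
  ∑ x, Lmap p x * Lmap q x

lemma Lmap_eq {A : Type*} [Fintype A] {p : A → ℝ} (hp : ∀ x, 0 < p x) (x : A) :
    Lmap p x = (Fintype.card A : ℝ) * Real.log (p x) - ∑ y, Real.log (p y) := by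
  have hprod : (0 : ℝ) < ∏ y, p y := Finset.prod_pos (fun y _ => hp y)
  unfold Lmap
  rw [Real.log_div (pow_ne_zero _ (hp x).ne') (ne_of_gt hprod), Real.log_pow,
    Real.log_prod (fun y _ => (hp y).ne')]

lemma Lmap_padd {A : Type*} [Fintype A] [Nonempty A] {p q : A → ℝ} (hp : ∀ x, 0 < p x)
    (hq : ∀ x, 0 < q x) (x : A) :
    Lmap (padd p q) x = Lmap p x + Lmap q x := by
  have hS : (0 : ℝ) < ∑ y, p y * q y :=
    Finset.sum_pos (fun y _ => mul_pos (hp y) (hq y)) Finset.univ_nonempty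
  have hpq : ∀ y, 0 < padd p q y := fun y => by
    unfold padd; exact div_pos (mul_pos (hp y) (hq y)) hS
  rw [Lmap_eq hpq, Lmap_eq hp, Lmap_eq hq]
  have hlog : ∀ y, Real.log (padd p q y)
      = Real.log (p y) + Real.log (q y) - Real.log (∑ y, p y * q y) := by
    intro y
    unfold padd
    rw [Real.log_div (mul_pos (hp y) (hq y)).ne' hS.ne',
      Real.log_mul (hp y).ne' (hq y).ne']
  rw [hlog]
  have : ∑ y, Real.log (padd p q y)
      = ∑ y, Real.log (p y) + ∑ y, Real.log (q y)
        - (Fintype.card A : ℝ) * Real.log (∑ y, p y * q y) := by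
    simp only [hlog, Finset.sum_sub_distrib, Finset.sum_add_distrib,
      Finset.sum_const, Finset.card_univ, nsmul_eq_mul]
  rw [this]
  ring

lemma Lmap_psmul {A : Type*} [Fintype A] [Nonempty A] (α : ℝ) {p : A → ℝ} (hp : ∀ x, 0 < p x)
    (x : A) : Lmap (psmul α p) x = α * Lmap p x := by
  have hT : (0 : ℝ) < ∑ y, p y ^ α :=
    Finset.sum_pos (fun y _ => Real.rpow_pos_of_pos (hp y) α) Finset.univ_nonempty
  have hps : ∀ y, 0 < psmul α p y := fun y => by
    unfold psmul
    exact div_pos (Real.rpow_pos_of_pos (hp y) α) hT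
  rw [Lmap_eq hps, Lmap_eq hp]
  have hlog : ∀ y, Real.log (psmul α p y)
      = α * Real.log (p y) - Real.log (∑ y, p y ^ α) := by
    intro y
    unfold psmul
    rw [Real.log_div (Real.rpow_pos_of_pos (hp y) α).ne' hT.ne',
      Real.log_rpow (hp y)]
  rw [hlog]
  have : ∑ y, Real.log (psmul α p y)
      = α * ∑ y, Real.log (p y)
        - (Fintype.card A : ℝ) * Real.log (∑ y, p y ^ α) := by
    simp only [hlog, Finset.sum_sub_distrib, Finset.sum_const, Finset.card_univ,
      nsmul_eq_mul, ← Finset.mul_sum]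
  rw [this]
  ring

/-- `⟨p,q⟩ = Σ_x L(p)_x L(q)_x` is an inner product on the vector space of
strictly positive PMFs: it is symmetric, additive and homogeneous (w.r.t. the
PMF operations ⊞, ⊡) in the first argument, nonnegative on the diagonal, and
definite (vanishing only at the zero vector, the uniform PMF). -/
theorem stmt_5 {A : Type*} [Fintype A] :
    (∀ p q : A → ℝ, IsPPMF p → IsPPMF q → pinner p q = pinner q p) ∧
    (∀ p q r : A → ℝ, IsPPMF p → IsPPMF q → IsPPMF r →
      pinner (padd p q) r = pinner p r + pinner q r) ∧
    (∀ (α : ℝ) (p q : A → ℝ), IsPPMF p → IsPPMF q →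
      pinner (psmul α p) q = α * pinner p q) ∧
    (∀ p : A → ℝ, IsPPMF p → 0 ≤ pinner p p) ∧
    (∀ p : A → ℝ, IsPPMF p → (pinner p p = 0 ↔ p = unif A)) := by
  refine ⟨?_, ?_, ?_, ?_, ?_⟩
  · intro p q _ _
    unfold pinner
    exact Finset.sum_congr rfl fun x _ => mul_comm _ _
  · intro p q r hp hq hr
    by_cases hA : Nonempty A
    · unfold pinner
      rw [← Finset.sum_add_distrib]
      refine Finset.sum_congr rfl fun x _ => ?_
      have : Nonempty A := hA
      rw [Lmap_padd hp.1 hq.1, add_mul]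
    · simp [pinner, Finset.univ_eq_empty_iff.2 (not_nonempty_iff.mp hA)]
  · intro α p q hp hq
    by_cases hA : Nonempty A
    · unfold pinner
      rw [Finset.mul_sum]
      refine Finset.sum_congr rfl fun x _ => ?_
      have : Nonempty A := hA
      rw [Lmap_psmul α hp.1, mul_assoc]
    · simp [pinner, Finset.univ_eq_empty_iff.2 (not_nonempty_iff.mp hA)]
  · intro p _
    exact Finset.sum_nonneg fun x _ => mul_self_nonneg _
  · intro p hp
    have hA : Nonempty A := by
      by_contra h
      have := hp.2
      rw [Finset.univ_eq_empty_iff.2 (not_nonempty_iff.mp h)] at this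
      simp at this
    have hcard : (0 : ℝ) < (Fintype.card A : ℝ) := by
      exact_mod_cast Fintype.card_pos
    constructor
    · intro h
      have hzero : ∀ x, Lmap p x = 0 := by
        intro x
        have h0 : ∀ x ∈ Finset.univ, (0:ℝ) ≤ Lmap p x * Lmap p x :=
          fun x _ => mul_self_nonneg _
        have := (Finset.sum_eq_zero_iff_of_nonneg h0).mp h x (Finset.mem_univ x)
        exact mul_self_eq_zero.mp this
      -- log p is constant
      have hconst : ∀ x y : A, p x = p y := by
        intro x y
        have hx := hzero x
        have hy := hzero y
        rw [Lmap_eq hp.1] at hx hy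
        have : (Fintype.card A : ℝ) * Real.log (p x)
            = (Fintype.card A : ℝ) * Real.log (p y) := by linarith
        have hlog : Real.log (p x) = Real.log (p y) :=
          mul_left_cancel₀ hcard.ne' this
        exact Real.log_injOn_pos (Set.mem_Ioi.mpr (hp.1 x))
          (Set.mem_Ioi.mpr (hp.1 y)) hlog
      funext x
      have hsum : ∑ y, p y = 1 := hp.2
      have : ∑ y : A, p x = 1 := by
        rw [← hsum]; exact Finset.sum_congr rfl fun y _ => hconst x y
      rw [Finset.sum_const, Finset.card_univ, nsmul_eq_mul] at this
      unfold unif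
      field_simp at this ⊢
      linarith
    · intro h
      subst h
      have : ∀ x : A, Lmap (unif A) x = 0 := by
        intro x
        rw [Lmap_eq (fun y => by unfold unif; positivity)]
        simp [unif]
      unfold pinner
      simp [this]
end

section
/- Let F be a finite field of order m and a, b ∈ F^N nonzero vectors such that a ≠ α b for every α ∈ F. Then the subspaces V_{F^N}^a and V_{F^N}^b of soft parity check interactions are orthogonal with respect to the inner product ⟨p_1, p_2⟩ = Σ_{x∈F^N} log( p_1(x)^{m^N} / Π_y p_1(y) ) · log( p_2(x)^{m^N} / Π_y p_2(y) ). -/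
open Finset

/-- The dot product `a·x = Σ_k a_k x_k` over a field `F`. -/
def adot {F : Type*} [Field F] {N : ℕ} (a x : Fin N → F) : F :=
  ∑ k, a k * x k

/-- The soft parity check interaction with coefficient vector `a` and
underlying PMF `q`: `p(x) = |F|^{-(N-1)} q(a·x)`. -/
noncomputable def spci {F : Type*} [Field F] [Fintype F] {N : ℕ}
    (a : Fin N → F) (q : F → ℝ) : (Fin N → F) → ℝ :=
  fun x => ((Fintype.card F : ℝ) ^ (N - 1))⁻¹ * q (adot a x)

/-- The `i`-th one-dimensional marginal of a joint PMF `p` on `F^N`. -/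
noncomputable def marginal {F : Type*} [Field F] [Fintype F] [DecidableEq F] {N : ℕ}
    (p : (Fin N → F) → ℝ) (i : Fin N) : F → ℝ :=
  fun t => ∑ x : Fin N → F, if x i = t then p x else 0

section stmt13aux
set_option linter.unusedSectionVars false
variable {F : Type*} [Field F] [Fintype F] {N : ℕ}

private lemma adot_add13 (a x y : Fin N → F) : adot a (x + y) = adot a x + adot a y := by
  simp [adot, mul_add, Finset.sum_add_distrib]

private lemma adot_single13 (a : Fin N → F) (j : Fin N) (c : F) :
    adot a (Pi.single j c) = a j * c := by
  simp [adot, Pi.single_apply, mul_ite]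

private lemma sum_comp_fiber13 {G H : Type*} [Fintype G] [Fintype H] [DecidableEq H]
    [AddGroup G] [AddGroup H] (L : G → H)
    (hadd : ∀ x y, L (x + y) = L x + L y) (hsurj : Function.Surjective L)
    (h : H → ℝ) :
    ∑ x : G, h (L x)
      = ((Finset.univ.filter (fun x : G => L x = 0)).card : ℝ) * ∑ v : H, h v := by
  classical
  have himg : (Finset.univ : Finset G).image L = Finset.univ :=
    Finset.image_univ_of_surjective hsurj
  have hsub : ∀ x y : G, L (x - y) = L x - L y := by
    intro x y
    have h1 := hadd (x - y) y
    rw [sub_add_cancel] at h1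
    exact eq_sub_of_add_eq h1.symm
  have hcard : ∀ v : H, (Finset.univ.filter (fun x : G => L x = v)).card
      = (Finset.univ.filter (fun x : G => L x = 0)).card := by
    intro v
    obtain ⟨x₀, hx₀⟩ := hsurj v
    refine Finset.card_bij' (fun x _ => x - x₀) (fun t _ => t + x₀) ?_ ?_ ?_ ?_
    · intro x hx
      simp only [Finset.mem_filter, Finset.mem_univ, true_and] at hx ⊢
      rw [hsub, hx, hx₀, sub_self]
    · intro t ht
      simp only [Finset.mem_filter, Finset.mem_univ, true_and] at ht ⊢
      rw [hadd, ht, hx₀, zero_add]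
    · intro x _; simp
    · intro t _; simp
  rw [Finset.sum_comp h L, himg]
  rw [Finset.sum_congr rfl (fun v _ => by rw [hcard v])]
  rw [Finset.mul_sum]
  exact Finset.sum_congr rfl (fun v _ => by rw [nsmul_eq_mul])

private lemma adot_surj13 (a : Fin N → F) (ha : a ≠ 0) : Function.Surjective (adot a) := by
  classical
  obtain ⟨k, hk⟩ : ∃ k, a k ≠ 0 := by
    by_contra h; push_neg at h; exact ha (funext h)
  intro t
  refine ⟨Pi.single k (t / a k), ?_⟩
  rw [adot_single13]
  field_simp

private lemma pair_surj13 (a b : Fin N → F) (hb : b ≠ 0) (hind : ∀ α : F, a ≠ α • b) :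
    Function.Surjective (fun x : Fin N → F => (adot a x, adot b x)) := by
  classical
  obtain ⟨k, hk⟩ : ∃ k, b k ≠ 0 := by
    by_contra h; push_neg at h; exact hb (funext h)
  obtain ⟨j, hj⟩ : ∃ j, a j * b k ≠ a k * b j := by
    by_contra h; push_neg at h
    apply hind (a k / b k)
    funext i
    have hi := h i
    have : a i = a k / b k * b i := by field_simp; linear_combination hi
    simpa using this
  have hdne : a j * b k - a k * b j ≠ 0 := sub_ne_zero.mpr hj
  rintro ⟨s, t⟩
  set d := a j * b k - a k * b j with hd
  refine ⟨Pi.single j ((s * b k - t * a k)/d) + Pi.single k ((a j * t - b j * s)/d), ?_⟩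
  simp only [adot_add13, adot_single13, Prod.mk.injEq]
  constructor <;> (field_simp; ring)

private lemma Lmap_spci13 (a : Fin N → F) (q : F → ℝ) (x : Fin N → F) :
    Lmap (spci a q) x
      = Real.log (q (adot a x) ^ (Fintype.card (Fin N → F)) / ∏ y, q (adot a y)) := by
  have hc : ((Fintype.card F : ℝ) ^ (N - 1))⁻¹ ≠ 0 := by
    have : (0:ℝ) < Fintype.card F := by exact_mod_cast Fintype.card_pos
    positivity
  unfold Lmap spci
  rw [mul_pow, Finset.prod_mul_distrib, Finset.prod_const, Finset.card_univ,
    mul_div_mul_left _ _ (pow_ne_zero _ hc)]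

private lemma sum_log_zero13 (a : Fin N → F) (ha : a ≠ 0) (q : F → ℝ) (hq : ∀ t, 0 < q t) :
    ∑ t : F, Real.log (q t ^ (Fintype.card (Fin N → F)) / ∏ y : Fin N → F, q (adot a y)) = 0 := by
  classical
  set M := Fintype.card (Fin N → F) with hM
  set P : ℝ := ∏ y : Fin N → F, q (adot a y) with hP
  have hPpos : 0 < P := Finset.prod_pos (fun y _ => hq _)
  have hlogP : Real.log P = ∑ y : Fin N → F, Real.log (q (adot a y)) :=
    Real.log_prod (fun y _ => (hq _).ne')
  set K := ((Finset.univ.filter (fun x : Fin N → F => adot a x = 0)).card : ℝ) with hK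
  have hfib := sum_comp_fiber13 (adot a) (adot_add13 a) (adot_surj13 a ha)
  have h1 : Real.log P = K * ∑ t : F, Real.log (q t) := by
    rw [hlogP, hfib (fun t => Real.log (q t))]
  have h2 : (M : ℝ) = K * (Fintype.card F : ℝ) := by
    have := hfib (fun _ => (1:ℝ))
    simpa [hM] using this
  have hterm : ∀ t : F, Real.log (q t ^ M / P)
      = (M : ℝ) * Real.log (q t) - Real.log P := by
    intro t
    rw [Real.log_div (pow_ne_zero _ (hq t).ne') hPpos.ne', Real.log_pow]
  rw [Finset.sum_congr rfl (fun t _ => hterm t)]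
  rw [Finset.sum_sub_distrib, ← Finset.mul_sum, Finset.sum_const, Finset.card_univ,
    nsmul_eq_mul, h1, h2]
  ring
end stmt13aux

/-- If `a ≠ α b` for every `α ∈ F`, then the SPCI subspaces `V_{F^N}^a` and
`V_{F^N}^b` are orthogonal with respect to the PMF inner product. -/

theorem stmt_13 {F : Type*} [Field F] [Fintype F] {N : ℕ}
    (a b : Fin N → F) (ha : a ≠ 0) (hb : b ≠ 0) (hind : ∀ α : F, a ≠ α • b)
    (q₁ q₂ : F → ℝ) (hq₁ : IsPPMF q₁) (hq₂ : IsPPMF q₂) :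
    pinner (spci a q₁) (spci b q₂) = 0 := by
  classical
  have hLa : ∀ x, Lmap (spci a q₁) x
      = Real.log (q₁ (adot a x) ^ (Fintype.card (Fin N → F)) / ∏ y, q₁ (adot a y)) :=
    Lmap_spci13 a q₁
  have hLb : ∀ x, Lmap (spci b q₂) x
      = Real.log (q₂ (adot b x) ^ (Fintype.card (Fin N → F)) / ∏ y, q₂ (adot b y)) :=
    Lmap_spci13 b q₂
  set M := Fintype.card (Fin N → F) with hM
  set f : F → ℝ := fun t => Real.log (q₁ t ^ M / ∏ y : Fin N → F, q₁ (adot a y)) with hf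
  set g : F → ℝ := fun t => Real.log (q₂ t ^ M / ∏ y : Fin N → F, q₂ (adot b y)) with hg
  have hsumf : ∑ t : F, f t = 0 := sum_log_zero13 a ha q₁ hq₁.1
  have hpadd : ∀ x y : Fin N → F,
      (fun x : Fin N → F => (adot a x, adot b x)) (x + y)
        = (fun x : Fin N → F => (adot a x, adot b x)) x
          + (fun x : Fin N → F => (adot a x, adot b x)) y := by
    intro x y; simp [adot_add13, Prod.ext_iff]
  have key := sum_comp_fiber13 (fun x : Fin N → F => (adot a x, adot b x))
      hpadd (pair_surj13 a b hb hind) (fun v => f v.1 * g v.2)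
  unfold pinner
  calc ∑ x, Lmap (spci a q₁) x * Lmap (spci b q₂) x
      = ∑ x : Fin N → F, f (adot a x) * g (adot b x) := by
        exact Finset.sum_congr rfl (fun x _ => by rw [hLa x, hLb x])
    _ = ((Finset.univ.filter
          (fun x : Fin N → F => (fun x : Fin N → F => (adot a x, adot b x)) x = 0)).card : ℝ)
          * ∑ v : F × F, f v.1 * g v.2 := key
    _ = 0 := by
        have : ∑ v : F × F, f v.1 * g v.2 = (∑ t : F, f t) * (∑ t : F, g t) := by
          rw [Finset.sum_mul_sum, Fintype.sum_prod_type]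
        rw [this, hsumf, zero_mul, mul_zero]
end

section
/- Every strictly positive PMF p on F^N (F a finite field of order m) factorizes as p(x) = (1/Z) Π_{i=1}^{M} q_i(a_i·x), where a_1, …, a_M are representatives of the M = (m^N − 1)/(m − 1) one-dimensional subspaces of F^N, each q_i is a strictly positive PMF on F, and Z is a normalizing constant. -/
open Finset

section Aux
variable {F : Type*} [Field F] [Fintype F]

lemma adot_smul' {N : ℕ} (α : F) (a z : Fin N → F) :
    adot (α • a) z = α * adot a z := by
  simp [adot, Finset.mul_sum, mul_assoc]

lemma adot_sub' {N : ℕ} (a y x : Fin N → F) :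
    adot a (y - x) = adot a y - adot a x := by
  simp [adot, mul_sub, Finset.sum_sub_distrib]

lemma adot_sub_left' {N : ℕ} (a b z : Fin N → F) :
    adot (a - b) z = adot a z - adot b z := by
  simp [adot, sub_mul, Finset.sum_sub_distrib]

lemma card_ker' [DecidableEq F] {N : ℕ} (hN : 1 ≤ N)
    {z : Fin N → F} (hz : z ≠ 0) :
    (univ.filter fun b : Fin N → F => adot b z = 0).card = Fintype.card F ^ (N - 1) := by
  classical
  obtain ⟨k0, hk0⟩ : ∃ k, z k ≠ 0 := by
    by_contra h; push_neg at h; exact hz (funext h)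
  set w : F → (Fin N → F) := fun c k => if k = k0 then c / z k0 else 0 with hw
  have hadw : ∀ c, adot (w c) z = c := by
    intro c
    rw [adot, Finset.sum_eq_single k0]
    · simp [w, div_mul_cancel₀ _ hk0]
    · intro k _ hk; simp [w, hk]
    · intro h; exact absurd (mem_univ k0) h
  have hfib : ∀ c : F, (univ.filter fun b : Fin N → F => adot b z = c).card
      = (univ.filter fun b : Fin N → F => adot b z = 0).card := by
    intro c
    apply Finset.card_bij' (fun b _ => b - w c) (fun b _ => b + w c)
    · intro b hb
      simp only [mem_filter, mem_univ, true_and] at hb ⊢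
      rw [adot_sub_left', hb, hadw, sub_self]
    · intro b hb
      simp only [mem_filter, mem_univ, true_and] at hb ⊢
      have h1 : b + w c - w c = b := by abel
      calc adot (b + w c) z = adot (b + w c) z - adot (w c) z + c := by rw [hadw]; ring
        _ = adot (b + w c - w c) z + c := by rw [adot_sub_left']
        _ = c := by rw [h1, hb, zero_add]
    · intro b _; abel
    · intro b _; abel
  have hsum := Finset.card_eq_sum_card_fiberwise
    (s := (univ : Finset (Fin N → F))) (t := (univ : Finset F))
    (f := fun b => adot b z) (fun b _ => mem_univ _)
  simp only [hfib] at hsum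
  rw [Finset.sum_const, card_univ, card_univ, smul_eq_mul] at hsum
  have hcard : Fintype.card (Fin N → F) = Fintype.card F ^ N := by
    simp [Fintype.card_fun]
  rw [hcard] at hsum
  have hm : 0 < Fintype.card F := Fintype.card_pos
  have hpow : Fintype.card F ^ N = Fintype.card F * Fintype.card F ^ (N - 1) := by
    conv_lhs => rw [show N = (N - 1) + 1 by omega]
    ring
  rw [hpow] at hsum
  exact Nat.eq_of_mul_eq_mul_left hm hsum.symm

lemma count_lines' [DecidableEq F] {N M : ℕ}
    (hMcard : M * (Fintype.card F - 1) = Fintype.card F ^ N - 1)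
    (a : Fin M → Fin N → F) (h0 : ∀ i, a i ≠ 0)
    (hind : ∀ i j, i ≠ j → ∀ α : F, a i ≠ α • a j)
    {z : Fin N → F}
    (hker : (univ.filter fun b : Fin N → F => adot b z = 0).card = Fintype.card F ^ (N - 1)) :
    (univ.filter fun i => adot (a i) z = 0).card * (Fintype.card F - 1)
      = Fintype.card F ^ (N - 1) - 1 := by
  classical
  set e : Fin M × Fˣ → {b : Fin N → F // b ≠ 0} :=
    fun p => ⟨(p.2 : F) • a p.1, smul_ne_zero p.2.ne_zero (h0 p.1)⟩ with he
  have einj : Function.Injective e := by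
    rintro ⟨i, u⟩ ⟨j, v⟩ h
    have hval : (u : F) • a i = (v : F) • a j := congrArg Subtype.val h
    by_cases hij : i = j
    · subst hij
      have h2 : ((u : F) - (v : F)) • a i = 0 := by
        rw [sub_smul, hval, sub_self]
      have huv : (u : F) = (v : F) := by
        rcases smul_eq_zero.mp h2 with h1 | h1
        · exact sub_eq_zero.mp h1
        · exact absurd h1 (h0 i)
      exact Prod.ext rfl (Units.ext huv)
    · exfalso
      apply hind i j hij ((u : F)⁻¹ * (v : F))
      rw [mul_smul, ← hval, inv_smul_smul₀ (Units.ne_zero u)]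
  have ecard : Fintype.card (Fin M × Fˣ) = Fintype.card {b : Fin N → F // b ≠ 0} := by
    rw [Fintype.card_prod, Fintype.card_fin, Fintype.card_units]
    rw [Fintype.card_subtype_compl, Fintype.card_subtype_eq (0 : Fin N → F)]
    rw [hMcard]
    simp [Fintype.card_fun]
  have ebij : Function.Bijective e :=
    (Fintype.bijective_iff_injective_and_card e).mpr ⟨einj, ecard⟩
  have hS : (univ.filter fun b : Fin N → F => b ≠ 0 ∧ adot b z = 0).card
      = Fintype.card F ^ (N - 1) - 1 := by
    have hset : (univ.filter fun b : Fin N → F => b ≠ 0 ∧ adot b z = 0)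
        = (univ.filter fun b : Fin N → F => adot b z = 0).erase 0 := by
      ext b; simp [mem_erase, and_comm]
    rw [hset, Finset.card_erase_of_mem, hker]
    rw [mem_filter]
    simp [adot]
  have hT : ((univ.filter fun i => adot (a i) z = 0) ×ˢ (univ : Finset Fˣ)).card
      = (univ.filter fun b : Fin N → F => b ≠ 0 ∧ adot b z = 0).card := by
    apply Finset.card_bij (fun p _ => (p.2 : F) • a p.1)
    · rintro ⟨i, u⟩ hp
      simp only [mem_product, mem_filter, mem_univ, true_and] at hp
      simp only [mem_filter, mem_univ, true_and]
      refine ⟨smul_ne_zero (Units.ne_zero u) (h0 i), ?_⟩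
      rw [adot_smul', hp.1, mul_zero]
    · rintro ⟨i, u⟩ _ ⟨j, v⟩ _ h
      exact einj (a₁ := (i, u)) (a₂ := (j, v)) (Subtype.ext h)
    · intro b hb
      simp only [mem_filter, mem_univ, true_and] at hb
      obtain ⟨⟨i, u⟩, hiu⟩ := ebij.surjective ⟨b, hb.1⟩
      have hval : (u : F) • a i = b := congrArg Subtype.val hiu
      refine ⟨(i, u), ?_, hval⟩
      simp only [mem_product, mem_filter, mem_univ, true_and, and_true]
      have h3 : (u : F) * adot (a i) z = 0 := by
        rw [← adot_smul', hval, hb.2]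
      rcases mul_eq_zero.mp h3 with h1 | h1
      · exact absurd h1 (Units.ne_zero u)
      · exact h1
  rw [← hS, ← hT, Finset.card_product, card_univ, Fintype.card_units]

lemma main_calc' [DecidableEq F] {N M K : ℕ}
    (a : Fin M → Fin N → F)
    (hKconst : ∀ z : Fin N → F, z ≠ 0 →
      (univ.filter fun i => adot (a i) z = 0).card = K)
    (hMK : (M : ℝ) = (K : ℝ) + (Fintype.card F : ℝ) ^ (N - 1))
    (L : (Fin N → F) → ℝ) (x : Fin N → F) :
    ∑ i, (∑ y, if adot (a i) y = adot (a i) x then L y else 0)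
      = (K : ℝ) * (∑ y, L y) + (Fintype.card F : ℝ) ^ (N - 1) * L x := by
  classical
  set D : ℝ := (Fintype.card F : ℝ) ^ (N - 1) with hD
  set cnt : (Fin N → F) → ℕ :=
    fun y => (univ.filter fun i => adot (a i) y = adot (a i) x).card with hcnt
  have swap : ∑ i, (∑ y, if adot (a i) y = adot (a i) x then L y else 0)
      = ∑ y, (cnt y : ℝ) * L y := by
    rw [Finset.sum_comm]
    refine Finset.sum_congr rfl fun y _ => ?_
    rw [← Finset.sum_filter, Finset.sum_const, nsmul_eq_mul]
  rw [swap]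
  have hcy : ∀ y : Fin N → F, y ≠ x → cnt y = K := by
    intro y hyx
    have hz : y - x ≠ 0 := sub_ne_zero.mpr hyx
    have hf : (univ.filter fun i => adot (a i) y = adot (a i) x)
        = (univ.filter fun i => adot (a i) (y - x) = 0) := by
      apply Finset.filter_congr
      intro i _
      simp [adot_sub', sub_eq_zero]
    rw [hcnt]; simp only []
    rw [hf]
    exact hKconst (y - x) hz
  have hcx : cnt x = M := by simp [hcnt]
  have step : ∀ y : Fin N → F, (cnt y : ℝ) * L y
      = ((cnt y : ℝ) - K) * L y + K * L y := by intro y; ring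
  rw [Finset.sum_congr rfl fun y _ => step y, Finset.sum_add_distrib, ← Finset.mul_sum]
  have hsingle : ∑ y : Fin N → F, ((cnt y : ℝ) - K) * L y = D * L x := by
    rw [Finset.sum_eq_single x]
    · rw [hcx, hMK]; ring
    · intro y _ hyx
      rw [hcy y hyx]; ring
    · intro h; exact absurd (mem_univ x) h
  rw [hsingle]
  ring

end Aux

/-- Every strictly positive PMF `p` on `F^N` factorizes as
`p(x) = (1/Z) Π_i q_i(a_i·x)` over representatives `a_1, …, a_M` of the
one-dimensional subspaces of `F^N`, with each `q_i` a strictly positive PMF on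
`F` and `Z` a normalizing constant. -/
theorem stmt_16 {F : Type*} [Field F] [Fintype F] {N M : ℕ}
    (hM : M = (Fintype.card F ^ N - 1) / (Fintype.card F - 1))
    (a : Fin M → Fin N → F) (h0 : ∀ i, a i ≠ 0)
    (hind : ∀ i j, i ≠ j → ∀ α : F, a i ≠ α • a j)
    (p : (Fin N → F) → ℝ) (hp : IsPPMF p) :
    ∃ q : Fin M → F → ℝ, (∀ i, IsPPMF (q i)) ∧
      ∃ Z : ℝ, 0 < Z ∧ ∀ x, p x = (1 / Z) * ∏ i, q i (adot (a i) x) := by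
  classical
  obtain ⟨hppos, hpsum⟩ := hp
  have hmpos : 0 < Fintype.card F := Fintype.card_pos
  have hm2 : 2 ≤ Fintype.card F := Fintype.one_lt_card
  rcases Nat.eq_zero_or_pos N with hN0 | hN1
  · -- degenerate case N = 0
    subst hN0
    have hM0 : M = 0 := by simp at hM; omega
    subst hM0
    refine ⟨fun _ t => (Fintype.card F : ℝ)⁻¹, ?_, 1, one_pos, ?_⟩
    · intro i
      constructor
      · intro t; positivity
      · rw [Finset.sum_const, card_univ, nsmul_eq_mul,
          mul_inv_cancel₀ (by exact_mod_cast hmpos.ne')]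
    · intro x
      have hx : p x = 1 := by
        have huniv : (univ : Finset (Fin 0 → F)) = {x} := by
          ext y
          simp only [mem_univ, mem_singleton, true_iff]
          exact Subsingleton.elim y x
        rw [huniv, Finset.sum_singleton] at hpsum
        exact hpsum
      simp [hx]
  · -- main case N ≥ 1
    set m := Fintype.card F with hm
    have hdvdN : (m - 1) ∣ m ^ N - 1 := by
      have := Nat.sub_dvd_pow_sub_pow m 1 N
      simpa using this
    have hdvdN1 : (m - 1) ∣ m ^ (N - 1) - 1 := by
      have := Nat.sub_dvd_pow_sub_pow m 1 (N - 1)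
      simpa using this
    have hMcard : M * (m - 1) = m ^ N - 1 := by
      rw [hM]; exact Nat.div_mul_cancel hdvdN
    set K : ℕ := (m ^ (N - 1) - 1) / (m - 1) with hK
    have hKcard : K * (m - 1) = m ^ (N - 1) - 1 := Nat.div_mul_cancel hdvdN1
    have hKconst : ∀ z : Fin N → F, z ≠ 0 →
        (univ.filter fun i => adot (a i) z = 0).card = K := by
      intro z hz
      have h1 := count_lines' hMcard a h0 hind (card_ker' hN1 hz)
      have h2 : (univ.filter fun i => adot (a i) z = 0).card * (m - 1) = K * (m - 1) := by
        rw [h1, hKcard]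
      exact Nat.eq_of_mul_eq_mul_right (by omega) h2
    -- real arithmetic
    set D : ℝ := (m : ℝ) ^ (N - 1) with hD
    have hDpos : 0 < D := by positivity
    have h1m : (1 : ℕ) ≤ m := by omega
    have h1mN : (1 : ℕ) ≤ m ^ N := Nat.one_le_pow _ _ (by omega)
    have h1mN1 : (1 : ℕ) ≤ m ^ (N - 1) := Nat.one_le_pow _ _ (by omega)
    have hMr : (M : ℝ) * ((m : ℝ) - 1) = (m : ℝ) ^ N - 1 := by
      have h := congrArg (fun n : ℕ => (n : ℝ)) hMcard
      push_cast [Nat.cast_sub h1m, Nat.cast_sub h1mN] at h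
      exact h
    have hKr : (K : ℝ) * ((m : ℝ) - 1) = (m : ℝ) ^ (N - 1) - 1 := by
      have h := congrArg (fun n : ℕ => (n : ℝ)) hKcard
      push_cast [Nat.cast_sub h1m, Nat.cast_sub h1mN1] at h
      exact h
    have hm1ne : ((m : ℝ) - 1) ≠ 0 := by
      have : (2 : ℝ) ≤ (m : ℝ) := by exact_mod_cast hm2
      linarith
    have hpowr : (m : ℝ) ^ N = (m : ℝ) ^ (N - 1) * m := by
      conv_lhs => rw [show N = (N - 1) + 1 by omega]
      ring
    have hMK : (M : ℝ) = (K : ℝ) + D := by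
      have h : ((M : ℝ)) * ((m : ℝ) - 1) = ((K : ℝ) + D) * ((m : ℝ) - 1) := by
        rw [hMr, add_mul, hKr, hD, hpowr]
        ring
      exact mul_right_cancel₀ hm1ne h
    -- the construction
    set L : (Fin N → F) → ℝ := fun y => Real.log (p y) with hL
    set T : ℝ := ∑ y, L y with hT
    set g : Fin M → F → ℝ := fun i t => ∑ y, if adot (a i) y = t then L y else 0 with hg
    set S : Fin M → ℝ := fun i => ∑ t, Real.exp (g i t / D) with hS
    have hSpos : ∀ i, 0 < S i := by
      intro i
      apply Finset.sum_pos (fun t _ => Real.exp_pos _)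
      exact univ_nonempty
    set q : Fin M → F → ℝ := fun i t => Real.exp (g i t / D) / S i with hq
    have hqPPMF : ∀ i, IsPPMF (q i) := by
      intro i
      constructor
      · intro t; exact div_pos (Real.exp_pos _) (hSpos i)
      · rw [hq]
        simp only []
        rw [← Finset.sum_div, div_self (hSpos i).ne']
    refine ⟨q, hqPPMF, Real.exp ((K : ℝ) * T / D) / ∏ i, S i, ?_, ?_⟩
    · exact div_pos (Real.exp_pos _) (Finset.prod_pos fun i _ => hSpos i)
    · intro x
      have key : ∑ i, g i (adot (a i) x) = (K : ℝ) * T + D * L x := by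
        rw [hg]
        simp only []
        exact main_calc' a hKconst hMK L x
      have hprodS : (0 : ℝ) < ∏ i, S i := Finset.prod_pos fun i _ => hSpos i
      have hprod : ∏ i, q i (adot (a i) x)
          = Real.exp ((∑ i, g i (adot (a i) x)) / D) / ∏ i, S i := by
        rw [hq]
        simp only []
        rw [Finset.prod_div_distrib, ← Real.exp_sum, Finset.sum_div]
      rw [hprod, key]
      rw [one_div_div]
      rw [div_mul_div_comm, mul_comm (∏ i, S i) _, mul_div_mul_right _ _ hprodS.ne']
      rw [← Real.exp_sub]
      have harg : ((K : ℝ) * T + D * L x) / D - (K : ℝ) * T / D = L x := by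
        field_simp
        ring
      rw [harg, hL]
      exact (Real.exp_log (hppos x)).symm
end
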